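/- For any x ∈ ℝ, μ, a > 0, the equation q = 𝔼 tanh²(z√(μq) + μξx), where z ∼ N(0,1) and ξ ∼ N(0,a) are independent, has a unique solution q = q(x,μ,a) in (0,1] whenever x ≠ 0 or μ > 1; moreover q(x,μ,a) is strictly increasing in x for x ≥ 0. -/

import Mathlib

open MeasureTheory ProbabilityTheory

namespace RSaux

open Real MeasureTheory ProbabilityTheory
open scoped NNReal ENNReal

lemma continuous_tanh : Continuous Real.tanh := by
  have e : Real.tanh = fun y => sinh y / cosh y := funext Real.tanh_eq_sinh_div_cosh
  rw [e]
  exact Real.continuous_sinh.div Real.continuous_cosh fun x => (Real.cosh_pos x).ne'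

lemma tanh_nonneg {x : ℝ} (hx : 0 ≤ x) : 0 ≤ tanh x := by
  rw [Real.tanh_eq_sinh_div_cosh]
  rcases hx.eq_or_lt with h | h
  · simp [← h]
  · exact (div_nonneg (Real.sinh_pos_iff.2 h).le (Real.cosh_pos x).le)

lemma hasDerivAt_tanh (x : ℝ) : HasDerivAt tanh (1 / cosh x ^ 2) x := by
  have h := (Real.hasDerivAt_sinh x).div (Real.hasDerivAt_cosh x) (Real.cosh_pos x).ne'
  have e : Real.tanh = fun y => sinh y / cosh y := funext Real.tanh_eq_sinh_div_cosh
  rw [e]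
  refine h.congr_deriv ?_
  have h2 : cosh x * cosh x - sinh x * sinh x = 1 := by
    nlinarith [Real.cosh_sq_sub_sinh_sq x]
  rw [h2]

lemma tanh_strictMono : StrictMono tanh := by
  refine strictMono_of_deriv_pos fun x => ?_
  rw [(hasDerivAt_tanh x).deriv]
  positivity

lemma tanh_pos {x : ℝ} (hx : 0 < x) : 0 < tanh x := by
  have := tanh_strictMono hx
  rwa [Real.tanh_zero] at this

lemma tanh_sq_lt_one (x : ℝ) : tanh x ^ 2 < 1 := by
  have hc : (0:ℝ) < cosh x := Real.cosh_pos x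
  have h1 : tanh x ^ 2 = 1 - 1 / cosh x ^ 2 := by
    have := Real.cosh_sq_sub_sinh_sq x
    rw [Real.tanh_eq_sinh_div_cosh, div_pow]
    field_simp
    nlinarith
  have : 0 < 1 / cosh x ^ 2 := by positivity
  linarith

lemma abs_tanh_le_one (x : ℝ) : |tanh x| ≤ 1 := by
  nlinarith [tanh_sq_lt_one x, abs_nonneg (tanh x), sq_abs (tanh x)]

lemma tanh_le_self {x : ℝ} (hx : 0 ≤ x) : tanh x ≤ x := by
  have hmono : MonotoneOn (fun y : ℝ => y - tanh y) (Set.Ici 0) := by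
    apply monotoneOn_of_deriv_nonneg (convex_Ici 0)
    · exact (continuous_id.sub continuous_tanh).continuousOn
    · intro y _
      exact ((differentiable_id.sub
        fun z => (hasDerivAt_tanh z).differentiableAt) y).differentiableWithinAt
    · intro y _
      have hd : HasDerivAt (fun y : ℝ => y - tanh y) (1 - 1 / cosh y ^ 2) y :=
        (hasDerivAt_id y).sub (hasDerivAt_tanh y)
      rw [hd.deriv]
      have h1 : 1 ≤ cosh y ^ 2 := by nlinarith [Real.one_le_cosh y]
      have : 1 / cosh y ^ 2 ≤ 1 := by rw [div_le_one (by positivity)]; exact h1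
      linarith
  have := hmono (Set.self_mem_Ici) (Set.mem_Ici.2 hx) hx
  simp only [Real.tanh_zero, sub_zero] at this
  linarith

lemma self_sub_cube_le_tanh {x : ℝ} (hx : 0 ≤ x) : x - x ^ 3 / 3 ≤ tanh x := by
  have hmono : MonotoneOn (fun y : ℝ => tanh y - y + y ^ 3 / 3) (Set.Ici 0) := by
    apply monotoneOn_of_deriv_nonneg (convex_Ici 0)
    · exact ((continuous_tanh.sub continuous_id).add (by continuity)).continuousOn
    · intro y _
      exact (((hasDerivAt_tanh y).sub (hasDerivAt_id y)).add
        (((hasDerivAt_pow 3 y).div_const 3))).differentiableAt.differentiableWithinAt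
    · intro y hy
      rw [interior_Ici, Set.mem_Ioi] at hy
      have hd : HasDerivAt (fun y : ℝ => tanh y - y + y ^ 3 / 3)
          (1 / cosh y ^ 2 - 1 + (3 * y ^ 2) / 3) y := by
        have := ((hasDerivAt_tanh y).sub (hasDerivAt_id y)).add
          ((hasDerivAt_pow 3 y).div_const 3)
        exact this.congr_deriv (by norm_num)
      rw [hd.deriv]
      have hc : (0:ℝ) < cosh y := Real.cosh_pos y
      have h1 : tanh y ^ 2 = 1 - 1 / cosh y ^ 2 := by
        have := Real.cosh_sq_sub_sinh_sq y
        rw [Real.tanh_eq_sinh_div_cosh, div_pow]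
        field_simp
        nlinarith
      have h2 : tanh y ≤ y := tanh_le_self hy.le
      have h3 : 0 ≤ tanh y := tanh_nonneg hy.le
      nlinarith
  have := hmono (Set.self_mem_Ici) (Set.mem_Ici.2 hx) hx
  simp only [Real.tanh_zero] at this
  nlinarith [this]

lemma tanh_sq_ge (x : ℝ) : x ^ 2 - (2/3) * x ^ 4 ≤ tanh x ^ 2 := by
  have key : ∀ y : ℝ, 0 ≤ y → y ^ 2 - (2/3) * y ^ 4 ≤ tanh y ^ 2 := by
    intro y hy
    rcases le_or_gt (y^2) 3 with h | h
    · have h1 : y - y ^ 3 / 3 ≤ tanh y := self_sub_cube_le_tanh hy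
      have h2 : 0 ≤ y - y ^ 3 / 3 := by nlinarith
      have h3 : (y - y ^ 3 / 3) ^ 2 ≤ tanh y ^ 2 := by
        apply pow_le_pow_left₀ h2 h1
      nlinarith [sq_nonneg (y ^ 3)]
    · nlinarith [sq_nonneg (tanh y), sq_nonneg y]
  rcases le_or_gt 0 x with h | h
  · exact key x h
  · have := key (-x) (by linarith)
    rw [Real.tanh_neg] at this
    nlinarith [this]

lemma slope_lemma {u₁ u₂ : ℝ} (h1 : 0 < u₁) (h12 : u₁ < u₂) :
    u₁ * tanh u₂ < u₂ * tanh u₁ := by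
  have hanti : StrictAntiOn (fun u : ℝ => tanh u / u) (Set.Ioi 0) := by
    apply strictAntiOn_of_deriv_neg (convex_Ioi 0)
    · exact (continuous_tanh.continuousOn).div continuousOn_id fun u hu => ne_of_gt hu
    · intro u hu
      rw [interior_Ioi, Set.mem_Ioi] at hu
      have hd : HasDerivAt (fun u : ℝ => tanh u / u)
          ((1 / cosh u ^ 2 * u - tanh u * 1) / u ^ 2) u :=
        (hasDerivAt_tanh u).div (hasDerivAt_id u) (ne_of_gt hu)
      rw [hd.deriv]
      have hc : (0:ℝ) < cosh u := Real.cosh_pos u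
      have key : u / cosh u ^ 2 < tanh u := by
        rw [div_lt_iff₀ (by positivity), Real.tanh_eq_sinh_div_cosh]
        have h1 : u < sinh u := Real.self_lt_sinh_iff.2 hu
        have h2 : 1 ≤ cosh u := Real.one_le_cosh u
        have : sinh u / cosh u * cosh u ^ 2 = sinh u * cosh u := by
          field_simp
        rw [this]
        nlinarith
      have he : 1 / cosh u ^ 2 * u = u / cosh u ^ 2 := by ring
      apply div_neg_of_neg_of_pos
      · rw [he] at *; linarith
      · positivity
  have := hanti (Set.mem_Ioi.2 h1) (Set.mem_Ioi.2 (h1.trans h12)) h12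
  rw [div_lt_div_iff₀ (by linarith) h1] at this
  linarith

lemma lg_pointwise {b t₁ t₂ : ℝ} (hb : 0 ≤ b) (h1 : b < t₁) (h12 : t₁ < t₂) :
    (t₁ - b) * tanh (Real.sqrt t₂) ^ 2 < (t₂ - b) * tanh (Real.sqrt t₁) ^ 2 := by
  have ht1 : 0 < t₁ := lt_of_le_of_lt hb h1
  have hu1 : 0 < Real.sqrt t₁ := Real.sqrt_pos.2 ht1
  have hu12 : Real.sqrt t₁ < Real.sqrt t₂ := Real.sqrt_lt_sqrt ht1.le h12
  have hs := slope_lemma hu1 hu12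
  have hA : 0 ≤ tanh (Real.sqrt t₁) := tanh_nonneg (Real.sqrt_nonneg _)
  have hB : 0 ≤ tanh (Real.sqrt t₂) := tanh_nonneg (Real.sqrt_nonneg _)
  have hsq : t₁ * tanh (Real.sqrt t₂) ^ 2 < t₂ * tanh (Real.sqrt t₁) ^ 2 := by
    have h2 : (Real.sqrt t₁ * tanh (Real.sqrt t₂)) ^ 2 < (Real.sqrt t₂ * tanh (Real.sqrt t₁)) ^ 2 := by
      apply pow_lt_pow_left₀ hs (by positivity)
      norm_num
    rw [mul_pow, mul_pow, Real.sq_sqrt ht1.le, Real.sq_sqrt (ht1.trans h12).le] at h2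
    exact h2
  have hmono : tanh (Real.sqrt t₁) ^ 2 ≤ tanh (Real.sqrt t₂) ^ 2 := by
    have := tanh_strictMono hu12
    nlinarith
  nlinarith [mul_nonneg hb (sub_nonneg.2 hmono)]



lemma integrable_of_bound {α : Type*} [MeasurableSpace α] (μ : Measure α)
    [IsProbabilityMeasure μ] {f : α → ℝ} (hf : AEStronglyMeasurable f μ) (C : ℝ)
    (h : ∀ x, |f x| ≤ C) : Integrable f μ :=
  (integrable_const C).mono' hf (ae_of_all _ (by simpa using h))

/-- integral against a gaussian measure as an integral against the pdf. -/
lemma integral_gaussianReal_eq (m : ℝ) (V : ℝ≥0) (hV : V ≠ 0) (f : ℝ → ℝ) :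
    ∫ u, f u ∂(gaussianReal m V) = ∫ u, gaussianPDFReal m V u * f u := by
  rw [gaussianReal_of_var_ne_zero m hV]
  have h : gaussianPDF m V = fun u => ((gaussianPDFReal m V u).toNNReal : ℝ≥0∞) := rfl
  rw [h, integral_withDensity_eq_integral_smul₀
    ((measurable_gaussianPDFReal m V).real_toNNReal.aemeasurable) f]
  congr 1
  ext u
  rw [NNReal.smul_def, Real.coe_toNNReal _ (gaussianPDFReal_nonneg m V u), smul_eq_mul]

lemma gaussianReal_compl_singleton (c : ℝ) :
    (gaussianReal 0 1) ({c}ᶜ) = 1 := by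
  have h0 : (gaussianReal 0 1) {c} = 0 :=
    gaussianReal_absolutelyContinuous 0 one_ne_zero volume_singleton
  rw [measure_compl (measurableSet_singleton c) (measure_ne_top _ _), h0, measure_univ]
  simp

/-- strict comparison of integrals against the standard gaussian -/
lemma integral_lt_integral {f g : ℝ → ℝ}
    (hf : Integrable f (gaussianReal 0 1)) (hg : Integrable g (gaussianReal 0 1))
    (hle : ∀ z, f z ≤ g z) (hlt : ∀ z, z ≠ 0 → f z < g z) :
    ∫ z, f z ∂(gaussianReal 0 1) < ∫ z, g z ∂(gaussianReal 0 1) := by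
  have hsub : Integrable (fun z => g z - f z) (gaussianReal 0 1) := hg.sub hf
  have hpos : 0 < ∫ z, (g z - f z) ∂(gaussianReal 0 1) := by
    rw [integral_pos_iff_support_of_nonneg (fun z => sub_nonneg.2 (hle z)) hsub]
    have hsupp : ({(0:ℝ)}ᶜ : Set ℝ) ⊆ Function.support fun z => g z - f z := by
      intro z hz
      simp only [Function.mem_support]
      have := hlt z (by simpa using hz)
      intro h0
      nlinarith
    calc (0:ℝ≥0∞) < 1 := by norm_num
    _ = (gaussianReal 0 1) ({(0:ℝ)}ᶜ) := (gaussianReal_compl_singleton 0).symm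
    _ ≤ _ := measure_mono hsupp
  rw [integral_sub hg hf] at hpos
  linarith


/-- the function `V ↦ E tanh(√V z)²` for `z` standard gaussian. -/
noncomputable def gInt (V : ℝ) : ℝ :=
  ∫ z, tanh (Real.sqrt V * z) ^ 2 ∂(gaussianReal 0 1)

lemma abs_tanh_sq_le_one (x : ℝ) : |tanh x ^ 2| ≤ 1 := by
  rw [abs_of_nonneg (sq_nonneg _)]
  nlinarith [abs_tanh_le_one x, abs_nonneg (tanh x), sq_abs (tanh x)]

lemma integrable_tanh_sq (c : ℝ) :
    Integrable (fun z => tanh (c * z) ^ 2) (gaussianReal 0 1) :=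
  integrable_of_bound _ (((continuous_tanh.comp (continuous_const.mul continuous_id)).pow 2)).aestronglyMeasurable 1 fun x => abs_tanh_sq_le_one _

lemma gInt_nonneg (V : ℝ) : 0 ≤ gInt V :=
  integral_nonneg fun z => sq_nonneg _

lemma gInt_zero : gInt 0 = 0 := by
  simp [gInt]

lemma gInt_lt_one (V : ℝ) : gInt V < 1 := by
  have h := integral_lt_integral (f := fun z => tanh (Real.sqrt V * z) ^ 2)
    (g := fun _ => (1:ℝ)) (integrable_tanh_sq _) (integrable_const 1)
    (fun z => (tanh_sq_lt_one _).le) (fun z _ => tanh_sq_lt_one _)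
  simpa [gInt] using h

lemma tanh_sq_abs (x : ℝ) : tanh |x| ^ 2 = tanh x ^ 2 := by
  rcases le_or_gt 0 x with h | h
  · rw [abs_of_nonneg h]
  · rw [abs_of_neg h, Real.tanh_neg, neg_sq]

lemma tanh_sq_sqrt_mul {V : ℝ} (hV : 0 ≤ V) (z : ℝ) :
    tanh (Real.sqrt (V * z ^ 2)) ^ 2 = tanh (Real.sqrt V * z) ^ 2 := by
  rw [Real.sqrt_mul hV, Real.sqrt_sq_eq_abs]
  rw [← tanh_sq_abs (Real.sqrt V * z), abs_mul, abs_of_nonneg (Real.sqrt_nonneg V)]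

lemma tanh_sq_mono {x y : ℝ} (h : |x| ≤ |y|) : tanh x ^ 2 ≤ tanh y ^ 2 := by
  rw [← tanh_sq_abs x, ← tanh_sq_abs y]
  exact pow_le_pow_left₀ (tanh_nonneg (abs_nonneg x))
    (tanh_strictMono.monotone h) 2

lemma tanh_sq_strict_mono {x y : ℝ} (h : |x| < |y|) : tanh x ^ 2 < tanh y ^ 2 := by
  rw [← tanh_sq_abs x, ← tanh_sq_abs y]
  exact pow_lt_pow_left₀ (tanh_strictMono h) (tanh_nonneg (abs_nonneg x)) (by norm_num)

lemma gInt_lt_gInt {V₁ V₂ : ℝ} (h0 : 0 ≤ V₁) (h : V₁ < V₂) : gInt V₁ < gInt V₂ := by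
  have hs : Real.sqrt V₁ < Real.sqrt V₂ := Real.sqrt_lt_sqrt h0 h
  have habs : |Real.sqrt V₁| ≤ |Real.sqrt V₂| := by
    rw [abs_of_nonneg (Real.sqrt_nonneg _), abs_of_nonneg (Real.sqrt_nonneg _)]
    exact hs.le
  have habs' : |Real.sqrt V₁| < |Real.sqrt V₂| := by
    rw [abs_of_nonneg (Real.sqrt_nonneg _), abs_of_nonneg (Real.sqrt_nonneg _)]
    exact hs
  refine integral_lt_integral (integrable_tanh_sq _) (integrable_tanh_sq _) (fun z => ?_)
    (fun z hz => ?_)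
  · apply tanh_sq_mono
    rw [abs_mul, abs_mul]
    exact mul_le_mul_of_nonneg_right habs (abs_nonneg z)
  · apply tanh_sq_strict_mono
    rw [abs_mul, abs_mul]
    exact mul_lt_mul_of_pos_right habs' (abs_pos.2 hz)

lemma gInt_continuous : Continuous gInt := by
  apply continuous_of_dominated (bound := fun _ => (1:ℝ))
    (F := fun V z => tanh (Real.sqrt V * z) ^ 2)
  · exact fun V => (((continuous_tanh.comp (continuous_const.mul continuous_id)).pow 2)).aestronglyMeasurable
  · intro V
    filter_upwards with z
    rw [Real.norm_eq_abs]
    exact abs_tanh_sq_le_one _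
  · exact integrable_const 1
  · filter_upwards with z
    exact ((continuous_tanh.comp (Real.continuous_sqrt.mul continuous_const)).pow 2)

/-- the Latala-Guerra property. -/
lemma gInt_LG {μr c q₁ q₂ : ℝ} (hμ : 0 < μr) (hc : 0 ≤ c) (h1 : 0 < q₁) (h12 : q₁ < q₂) :
    q₁ * gInt (μr * q₂ + c) < q₂ * gInt (μr * q₁ + c) := by
  have hV₁ : (0:ℝ) ≤ μr * q₁ + c := by nlinarith
  have hV₂ : (0:ℝ) ≤ μr * q₂ + c := by nlinarith
  have key : ∀ z : ℝ, z ≠ 0 → q₁ * tanh (Real.sqrt (μr * q₂ + c) * z) ^ 2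
      < q₂ * tanh (Real.sqrt (μr * q₁ + c) * z) ^ 2 := by
    intro z hz
    have hz2 : (0:ℝ) < z ^ 2 := by positivity
    have h := lg_pointwise (b := c * z^2) (t₁ := (μr * q₁ + c) * z^2)
      (t₂ := (μr * q₂ + c) * z^2) (mul_nonneg hc (sq_nonneg z))
      (by nlinarith [mul_pos (mul_pos hμ h1) hz2])
      (by nlinarith [mul_pos (mul_pos hμ (show (0:ℝ) < q₂ - q₁ by linarith)) hz2])
    rw [tanh_sq_sqrt_mul hV₁, tanh_sq_sqrt_mul hV₂] at h
    have h3 : (μr * z^2) * (q₁ * tanh (Real.sqrt (μr * q₂ + c) * z) ^ 2)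
        < (μr * z^2) * (q₂ * tanh (Real.sqrt (μr * q₁ + c) * z) ^ 2) := by
      linear_combination h
    exact lt_of_mul_lt_mul_left h3 (mul_nonneg hμ.le (sq_nonneg z))
  rw [gInt, gInt, ← integral_const_mul, ← integral_const_mul]
  refine integral_lt_integral
    (Integrable.const_mul (integrable_tanh_sq _) _)
    (Integrable.const_mul (integrable_tanh_sq _) _) (fun z => ?_) (fun z hz => ?_)
  · rcases eq_or_ne z 0 with rfl | hz
    · simp
    · exact (key z hz).le
  · exact key z hz


lemma pdf_std (z : ℝ) : gaussianPDFReal 0 1 z = (Real.sqrt (2*π))⁻¹ * rexp (-z^2/2) := by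
  simp [gaussianPDFReal]

lemma poly_bound {z k : ℝ} (hk : 0 < k) : z^2 ≤ (2*k) * rexp (z^2/(2*k)) := by
  have hle : z^2/(2*k) ≤ rexp (z^2/(2*k)) := by
    linarith [Real.add_one_le_exp (z^2/(2*k))]
  calc z^2 = 2*k*(z^2/(2*k)) := by field_simp
  _ ≤ 2*k* rexp (z^2/(2*k)) := mul_le_mul_of_nonneg_left hle (by linarith)

lemma integrable_sq_exp : Integrable (fun z : ℝ => z^2 * rexp (-z^2/2)) := by
  refine ((integrable_exp_neg_mul_sq (show (0:ℝ) < 4⁻¹ by norm_num)).const_mul 4).mono'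
    ?_ (ae_of_all _ fun z => ?_)
  · exact ((continuous_pow 2).mul ((continuous_pow 2).neg.div_const 2).rexp).aestronglyMeasurable
  · have h1 : z^2 ≤ 4 * rexp (z^2/4) := by
      have := poly_bound (z := z) (k := 2) (by norm_num)
      norm_num at this ⊢
      linarith
    have h2 : (0:ℝ) < rexp (-z^2/2) := Real.exp_pos _
    rw [Real.norm_eq_abs, abs_of_nonneg (by positivity)]
    calc z^2 * rexp (-z^2/2) ≤ (4 * rexp (z^2/4)) * rexp (-z^2/2) :=
          mul_le_mul_of_nonneg_right h1 h2.le
    _ = 4 * rexp (-4⁻¹ * z^2) := by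
        rw [mul_assoc, ← Real.exp_add]
        congr 1
        ring
lemma integrable_pow4_exp : Integrable (fun z : ℝ => z^4 * rexp (-z^2/2)) := by
  refine ((integrable_exp_neg_mul_sq (show (0:ℝ) < 4⁻¹ by norm_num)).const_mul 64).mono'
    ?_ (ae_of_all _ fun z => ?_)
  · exact ((continuous_pow 4).mul ((continuous_pow 2).neg.div_const 2).rexp).aestronglyMeasurable
  · have h1 : z^2 ≤ 8 * rexp (z^2/8) := by
      have := poly_bound (z := z) (k := 4) (by norm_num)
      norm_num at this ⊢
      linarith
    have h1' : z^4 ≤ 64 * rexp (z^2/8) * rexp (z^2/8) := by nlinarith [Real.exp_pos (z^2/8)]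
    have h2 : (0:ℝ) < rexp (-z^2/2) := Real.exp_pos _
    rw [Real.norm_eq_abs, abs_of_nonneg (by positivity)]
    calc z^4 * rexp (-z^2/2) ≤ (64 * rexp (z^2/8) * rexp (z^2/8)) * rexp (-z^2/2) :=
          mul_le_mul_of_nonneg_right h1' h2.le
    _ = 64 * rexp (-4⁻¹ * z^2) := by
        rw [mul_assoc, mul_assoc, ← Real.exp_add, ← Real.exp_add]
        congr 2
        ring

lemma I2val : ∫ z : ℝ, z^2 * rexp (-z^2/2) = Real.sqrt (2*π) := by
  have he : (fun z : ℝ => z^2 * rexp (-z^2/2))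
      = fun z : ℝ => (fun u : ℝ => u^2 * rexp (-u^2/2)) |z| := by
    funext z
    show z^2 * rexp (-z^2/2) = |z|^2 * rexp (-|z|^2/2)
    rw [sq_abs]
  rw [he, integral_comp_abs (f := fun u : ℝ => u^2 * rexp (-u^2/2))]
  have hs : ∫ x in Set.Ioi (0:ℝ), x^2 * rexp (-x^2/2)
      = ∫ x in Set.Ioi (0:ℝ), x ^ (2:ℝ) * rexp (-(1/2) * x ^ (2:ℝ)) := by
    refine setIntegral_congr_fun measurableSet_Ioi fun x hx => ?_
    rw [show x ^ (2:ℝ) = x ^ (2:ℕ) from by rw [← Real.rpow_natCast x 2]; norm_num]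
    congr 1
    ring
  rw [hs, integral_rpow_mul_exp_neg_mul_rpow (by norm_num) (by norm_num) (by norm_num)]
  have hG : Real.Gamma ((2+1)/2) = Real.sqrt π / 2 := by
    rw [show ((2+1)/2 : ℝ) = 1/2 + 1 by norm_num, Real.Gamma_add_one (by norm_num),
      Real.Gamma_one_half_eq]
    ring
  rw [hG]
  have hr : ((1:ℝ)/2) ^ (-((2:ℝ)+1)/2) = 2 * Real.sqrt 2 := by
    rw [show (-((2:ℝ)+1)/2) = -(3/2 : ℝ) by norm_num, Real.rpow_neg (by norm_num)]
    rw [show ((1:ℝ)/2) = 2⁻¹ by norm_num, Real.inv_rpow (by norm_num), inv_inv]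
    rw [show ((3:ℝ)/2) = 1 + 1/2 by norm_num, Real.rpow_add (by norm_num), Real.rpow_one,
      ← Real.sqrt_eq_rpow]
  rw [hr, Real.sqrt_mul (by norm_num)]
  ring

lemma I4val : ∫ z : ℝ, z^4 * rexp (-z^2/2) = 3 * Real.sqrt (2*π) := by
  have he : (fun z : ℝ => z^4 * rexp (-z^2/2))
      = fun z : ℝ => (fun u : ℝ => u^4 * rexp (-u^2/2)) |z| := by
    funext z
    show z^4 * rexp (-z^2/2) = |z|^4 * rexp (-|z|^2/2)
    have h4 : |z|^4 = z^4 := by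
      rw [pow_abs]
      exact abs_of_nonneg (by positivity)
    rw [h4, sq_abs]
  rw [he, integral_comp_abs (f := fun u : ℝ => u^4 * rexp (-u^2/2))]
  have hs : ∫ x in Set.Ioi (0:ℝ), x^4 * rexp (-x^2/2)
      = ∫ x in Set.Ioi (0:ℝ), x ^ (4:ℝ) * rexp (-(1/2) * x ^ (2:ℝ)) := by
    refine setIntegral_congr_fun measurableSet_Ioi fun x hx => ?_
    rw [show x ^ (4:ℝ) = x ^ (4:ℕ) from by rw [← Real.rpow_natCast x 4]; norm_num,
      show x ^ (2:ℝ) = x ^ (2:ℕ) from by rw [← Real.rpow_natCast x 2]; norm_num]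
    congr 1
    ring
  rw [hs, integral_rpow_mul_exp_neg_mul_rpow (by norm_num) (by norm_num) (by norm_num)]
  have hG : Real.Gamma ((4+1)/2) = 3 * Real.sqrt π / 4 := by
    rw [show ((4+1)/2 : ℝ) = 3/2 + 1 by norm_num, Real.Gamma_add_one (by norm_num),
      show ((3:ℝ)/2) = 1/2 + 1 by norm_num, Real.Gamma_add_one (by norm_num),
      Real.Gamma_one_half_eq]
    ring
  rw [hG]
  have hr : ((1:ℝ)/2) ^ (-((4:ℝ)+1)/2) = 4 * Real.sqrt 2 := by
    rw [show (-((4:ℝ)+1)/2) = -(5/2 : ℝ) by norm_num, Real.rpow_neg (by norm_num)]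
    rw [show ((1:ℝ)/2) = 2⁻¹ by norm_num, Real.inv_rpow (by norm_num), inv_inv]
    rw [show ((5:ℝ)/2) = 1 + 1 + 1/2 by norm_num, Real.rpow_add (by norm_num),
      Real.rpow_add (by norm_num), Real.rpow_one, ← Real.sqrt_eq_rpow]
    ring
  rw [hr, Real.sqrt_mul (by norm_num)]
  ring


lemma integrable_dens_iff (f : ℝ → ℝ) :
    Integrable f (gaussianReal 0 1)
      ↔ Integrable (fun z => gaussianPDFReal 0 1 z * f z) volume := by
  rw [gaussianReal_of_var_ne_zero 0 one_ne_zero,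
    integrable_withDensity_iff (measurable_gaussianPDF 0 1)
      (ae_of_all _ fun x => ENNReal.ofReal_lt_top)]
  constructor <;> intro h <;> refine h.congr (ae_of_all _ fun z => ?_) <;>
    simp only [gaussianPDF_def] <;>
    rw [ENNReal.toReal_ofReal (gaussianPDFReal_nonneg 0 1 z)] <;> ring

lemma integrable_sq_g : Integrable (fun z : ℝ => z^2) (gaussianReal 0 1) := by
  rw [integrable_dens_iff]
  have he : (fun z : ℝ => gaussianPDFReal 0 1 z * z^2)
      = fun z : ℝ => (Real.sqrt (2*π))⁻¹ * (z^2 * rexp (-z^2/2)) := by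
    funext z
    rw [pdf_std]
    ring
  rw [he]
  exact integrable_sq_exp.const_mul _

lemma integrable_pow4_g : Integrable (fun z : ℝ => z^4) (gaussianReal 0 1) := by
  rw [integrable_dens_iff]
  have he : (fun z : ℝ => gaussianPDFReal 0 1 z * z^4)
      = fun z : ℝ => (Real.sqrt (2*π))⁻¹ * (z^4 * rexp (-z^2/2)) := by
    funext z
    rw [pdf_std]
    ring
  rw [he]
  exact integrable_pow4_exp.const_mul _

lemma sqrt_two_pi_pos : (0:ℝ) < Real.sqrt (2*π) :=
  Real.sqrt_pos.2 (by positivity)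

lemma Mom2 : ∫ z, z^2 ∂(gaussianReal 0 1) = 1 := by
  rw [integral_gaussianReal_eq 0 1 one_ne_zero]
  have he : (fun z : ℝ => gaussianPDFReal 0 1 z * z^2)
      = fun z : ℝ => (Real.sqrt (2*π))⁻¹ * (z^2 * rexp (-z^2/2)) := by
    funext z
    rw [pdf_std]
    ring
  rw [he, integral_const_mul, I2val, inv_mul_cancel₀ sqrt_two_pi_pos.ne']

lemma Mom4 : ∫ z, z^4 ∂(gaussianReal 0 1) = 3 := by
  rw [integral_gaussianReal_eq 0 1 one_ne_zero]
  have he : (fun z : ℝ => gaussianPDFReal 0 1 z * z^4)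
      = fun z : ℝ => (Real.sqrt (2*π))⁻¹ * (z^4 * rexp (-z^2/2)) := by
    funext z
    rw [pdf_std]
    ring
  rw [he, integral_const_mul, I4val]
  field_simp

lemma gInt_lb {V : ℝ} (hV : 0 ≤ V) : V - 2*V^2 ≤ gInt V := by
  have hpoint : ∀ z : ℝ, V*z^2 - (2/3)*V^2*z^4 ≤ tanh (Real.sqrt V * z)^2 := by
    intro z
    have h := tanh_sq_ge (Real.sqrt V * z)
    have e2 : (Real.sqrt V*z)^2 = V*z^2 := by rw [mul_pow, Real.sq_sqrt hV]
    have e4 : (Real.sqrt V*z)^4 = V^2*z^4 := by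
      rw [mul_pow, show (Real.sqrt V)^4 = ((Real.sqrt V)^2)^2 from by ring, Real.sq_sqrt hV]
    rw [e2, e4] at h
    linarith
  have hint : Integrable (fun z : ℝ => V*z^2 - (2/3)*V^2*z^4) (gaussianReal 0 1) :=
    (integrable_sq_g.const_mul V).sub (integrable_pow4_g.const_mul ((2/3)*V^2))
  have hmono := integral_mono hint (integrable_tanh_sq (Real.sqrt V)) hpoint
  rw [integral_sub (integrable_sq_g.const_mul V) (integrable_pow4_g.const_mul ((2/3)*V^2)),
    integral_const_mul, integral_const_mul, Mom2, Mom4] at hmono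
  rw [gInt] at *
  nlinarith [hmono]


lemma exponent_id {b s u z : ℝ} (hb : 0 < b) :
    -z^2/2 + -((u - z*s)^2/(2*b))
      = -(((s^2+b)/(2*b))*(z - s*u/(s^2+b))^2) + -(u^2/(2*(s^2+b))) := by
  have hW : (0:ℝ) < s^2 + b := by positivity
  field_simp
  ring

lemma conv_pdf (s : ℝ) {Va : ℝ≥0} (hVa : Va ≠ 0) (u : ℝ) :
    ∫ z, gaussianPDFReal 0 1 z * gaussianPDFReal (z*s) Va u
      = gaussianPDFReal 0 ((s^2 + (Va:ℝ)).toNNReal) u := by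
  have hb : (0:ℝ) < (Va:ℝ) := lt_of_le_of_ne Va.coe_nonneg
    (fun h => hVa (by rw [← NNReal.coe_inj]; simp [← h]))
  set b : ℝ := (Va:ℝ) with hbdef
  set W : ℝ := s^2 + b with hWdef
  have hW : 0 < W := by positivity
  set A : ℝ := W/(2*b) with hAdef
  have hA : 0 < A := by positivity
  set m : ℝ := s*u/W with hmdef
  have key : ∀ z : ℝ, gaussianPDFReal 0 1 z * gaussianPDFReal (z*s) Va u
      = ((Real.sqrt (2*π))⁻¹*(Real.sqrt (2*π*b))⁻¹) *
        (rexp (-(A*(z-m)^2)) * rexp (-u^2/(2*W))) := by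
    intro z
    rw [pdf_std]
    show (Real.sqrt (2*π))⁻¹ * rexp (-z^2/2) *
      ((Real.sqrt (2*π*b))⁻¹ * rexp (-(u - z*s)^2/(2*b))) = _
    rw [mul_mul_mul_comm, ← Real.exp_add, ← Real.exp_add]
    congr 1
    congr 1
    rw [hAdef, hmdef, hWdef]
    linear_combination exponent_id (b := b) (s := s) (u := u) (z := z) hb
  simp only [key]
  rw [integral_const_mul, integral_mul_const,
    integral_sub_right_eq_self (fun y => rexp (-(A*y^2))) m]
  simp_rw [← neg_mul]
  rw [integral_gaussian]
  show (Real.sqrt (2*π))⁻¹ * (Real.sqrt (2*π*b))⁻¹ * (Real.sqrt (π/A) * rexp (-u^2/(2*W)))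
    = _
  have hcoe : ((W.toNNReal : ℝ≥0) : ℝ) = W := Real.coe_toNNReal _ hW.le
  have hrhs : gaussianPDFReal 0 ((s^2 + b).toNNReal) u
      = (Real.sqrt (2*π*W))⁻¹ * rexp (-u^2/(2*W)) := by
    simp only [gaussianPDFReal, ← hWdef, hcoe]
    rw [sub_zero]
  rw [hrhs]
  have hπA : π/A = (2*π*b)/W := by
    rw [hAdef]
    field_simp
  rw [hπA, Real.sqrt_div (by positivity) W]
  have h1 : Real.sqrt (2*π*W) = Real.sqrt (2*π) * Real.sqrt W := by
    rw [← Real.sqrt_mul (by positivity)]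
  rw [h1]
  have hs2 : (0:ℝ) < Real.sqrt (2*π*b) := Real.sqrt_pos.2 (by positivity)
  have hs3 : (0:ℝ) < Real.sqrt W := Real.sqrt_pos.2 hW
  field_simp

lemma integral_tanh_g {W : ℝ} (hW : 0 ≤ W) :
    ∫ u, tanh u ^ 2 ∂(gaussianReal 0 W.toNNReal) = gInt W := by
  have hmap : (gaussianReal 0 1).map (fun z => Real.sqrt W * z)
      = gaussianReal 0 W.toNNReal := by
    have h := gaussianReal_map_const_mul (μ := 0) (v := 1) (Real.sqrt W)
    rw [mul_zero] at h
    have h2 : (NNReal.mk (Real.sqrt W ^ 2) (sq_nonneg _)) * 1 = W.toNNReal := by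
      apply NNReal.coe_injective
      simp [Real.sq_sqrt hW, Real.coe_toNNReal _ hW]
    rw [h2] at h
    exact h
  rw [← hmap, integral_map (f := fun u => tanh u ^ 2) (by fun_prop)
    (((continuous_tanh.pow 2)).aestronglyMeasurable)]
  rfl

lemma continuous_pdf2 (s : ℝ) (v : ℝ≥0) :
    Continuous fun p : ℝ×ℝ => gaussianPDFReal (p.1*s) v p.2 := by
  simp only [gaussianPDFReal]
  fun_prop


lemma rsRHS_eq {μr a x q : ℝ} (hμ : 0 < μr) (ha : 0 < a) (hq : 0 < q) :
    (∫ p : ℝ × ℝ, tanh (p.1 * Real.sqrt (μr * q) + μr * p.2 * x) ^ 2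
      ∂((gaussianReal 0 1).prod (gaussianReal 0 a.toNNReal)))
      = gInt (μr * q + μr^2 * x^2 * a) := by
  have ha' : a.toNNReal ≠ 0 := by
    simp only [ne_eq, Real.toNNReal_eq_zero, not_le]
    exact ha
  have hcont : Continuous fun p : ℝ × ℝ =>
      tanh (p.1 * Real.sqrt (μr * q) + μr * p.2 * x) ^ 2 :=
    (continuous_tanh.comp (((continuous_fst.mul continuous_const)).add
      ((continuous_const.mul continuous_snd).mul continuous_const))).pow 2
  have hI : Integrable (fun p : ℝ × ℝ =>
      tanh (p.1 * Real.sqrt (μr * q) + μr * p.2 * x) ^ 2)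
      ((gaussianReal 0 1).prod (gaussianReal 0 a.toNNReal)) :=
    integrable_of_bound _ hcont.aestronglyMeasurable 1 fun p => abs_tanh_sq_le_one _
  rw [integral_prod _ hI]
  rcases eq_or_ne x 0 with rfl | hx
  · -- x = 0 case
    simp only [mul_zero, add_zero]
    have hconst : ∀ z : ℝ, (∫ _ : ℝ, tanh (z * Real.sqrt (μr * q)) ^ 2
        ∂(gaussianReal 0 a.toNNReal)) = tanh (z * Real.sqrt (μr * q)) ^ 2 := by
      intro z
      rw [integral_const, probReal_univ]
      simp
    simp only [hconst]
    rw [show μr * q + μr^2 * 0^2 * a = μr * q by ring, gInt]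
    congr 1
    funext z
    rw [mul_comm]
  · -- x ≠ 0 case
    set s : ℝ := Real.sqrt (μr * q) with hsdef
    set t : ℝ := μr * x with htdef
    have ht : t ≠ 0 := mul_ne_zero hμ.ne' hx
    set Va : ℝ≥0 := NNReal.mk (t^2) (sq_nonneg t) * a.toNNReal with hVadef
    have hVa : Va ≠ 0 := by
      apply mul_ne_zero _ ha'
      intro h
      exact (pow_ne_zero 2 ht) (by simpa using congrArg NNReal.toReal h)
    have hVac : (Va : ℝ) = t^2 * a := by
      rw [hVadef, NNReal.coe_mul, Real.coe_toNNReal _ ha.le]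
      rfl
    -- inner integral
    have inner : ∀ z : ℝ, (∫ w, tanh (z * s + μr * w * x) ^ 2
        ∂(gaussianReal 0 a.toNNReal))
        = ∫ u, gaussianPDFReal (z*s) Va u * tanh u ^ 2 := by
      intro z
      have harg : (fun w : ℝ => tanh (z * s + μr * w * x) ^ 2)
          = fun w : ℝ => tanh (t * w + z * s) ^ 2 := by
        funext w
        rw [show z * s + μr * w * x = t * w + z * s by rw [htdef]; ring]
      rw [harg]
      have h1 : (gaussianReal 0 a.toNNReal).map (fun w => t * w)
          = gaussianReal 0 Va := by
        have := gaussianReal_map_const_mul (μ := 0) (v := a.toNNReal) t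
        rwa [mul_zero] at this
      have h2 := Measure.map_map (μ := gaussianReal 0 a.toNNReal)
        (measurable_add_const (z*s)) (measurable_const_mul t)
      rw [show ((· + z*s) ∘ (t * ·)) = (fun w : ℝ => t * w + z * s) from rfl] at h2
      have hmap : (gaussianReal 0 a.toNNReal).map (fun w => t * w + z * s)
          = gaussianReal (z*s) Va := by
        rw [← h2, h1, gaussianReal_map_add_const, zero_add]
      have hint := integral_map (φ := fun w : ℝ => t * w + z * s)
        (μ := gaussianReal 0 a.toNNReal) (f := fun u => tanh u ^ 2)
        (by fun_prop) (by rw [hmap]; exact (continuous_tanh.pow 2).aestronglyMeasurable)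
      rw [hmap] at hint
      rw [← hint, integral_gaussianReal_eq _ _ hVa]
    rw [integral_congr_ae (g := fun z : ℝ => ∫ u, gaussianPDFReal (z*s) Va u * tanh u ^ 2)
      (ae_of_all _ inner)]
    rw [integral_gaussianReal_eq 0 1 one_ne_zero]
    rw [integral_congr_ae (g := fun z : ℝ => ∫ u, gaussianPDFReal 0 1 z *
        (gaussianPDFReal (z*s) Va u * tanh u ^ 2))
      (ae_of_all _ fun z => (integral_const_mul _ _).symm)]
    -- integrability for swap
    have hpdf1c : Continuous (gaussianPDFReal 0 1) := by
      rw [gaussianPDFReal_def]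
      fun_prop
    have hFc : Continuous (Function.uncurry fun z u : ℝ =>
        gaussianPDFReal 0 1 z * (gaussianPDFReal (z*s) Va u * tanh u ^ 2)) := by
      apply Continuous.mul (hpdf1c.comp continuous_fst)
      exact (continuous_pdf2 s Va).mul ((continuous_tanh.comp continuous_snd).pow 2)
    have hFmeas : AEStronglyMeasurable (Function.uncurry fun z u : ℝ =>
        gaussianPDFReal 0 1 z * (gaussianPDFReal (z*s) Va u * tanh u ^ 2))
        (volume.prod volume) := hFc.aestronglyMeasurable
    have hptw_int : ∀ z : ℝ, Integrable
        (fun u => gaussianPDFReal (z*s) Va u * tanh u ^ 2) volume := by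
      intro z
      have h := Integrable.bdd_mul (integrable_gaussianPDFReal (z*s) Va)
        ((continuous_tanh.pow 2).aestronglyMeasurable)
        (ae_of_all _ fun u => by rw [Real.norm_eq_abs]; exact abs_tanh_sq_le_one u)
      exact h.congr (ae_of_all _ fun u => by simp only [Pi.pow_apply]; ring)
    have hle1 : ∀ z : ℝ, (∫ u, gaussianPDFReal (z*s) Va u * tanh u ^ 2) ≤ 1 := by
      intro z
      have hmono := integral_mono (hptw_int z) (integrable_gaussianPDFReal (z*s) Va)
        (fun u => mul_le_of_le_one_right (gaussianPDFReal_nonneg _ _ u)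
          (tanh_sq_lt_one u).le)
      rwa [integral_gaussianPDFReal_eq_one _ hVa] at hmono
    have hnn : ∀ z : ℝ, (0:ℝ) ≤ ∫ u, gaussianPDFReal (z*s) Va u * tanh u ^ 2 :=
      fun z => integral_nonneg fun u =>
        mul_nonneg (gaussianPDFReal_nonneg _ _ _) (sq_nonneg _)
    have hswapInt : Integrable (Function.uncurry fun z u : ℝ =>
        gaussianPDFReal 0 1 z * (gaussianPDFReal (z*s) Va u * tanh u ^ 2))
        (volume.prod volume) := by
      rw [integrable_prod_iff hFmeas]
      constructor
      · refine ae_of_all _ fun z => ?_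
        simpa [Function.uncurry] using (hptw_int z).const_mul (gaussianPDFReal 0 1 z)
      · have heq : ∀ z : ℝ, (∫ u, ‖gaussianPDFReal 0 1 z *
            (gaussianPDFReal (z*s) Va u * tanh u ^ 2)‖)
            = gaussianPDFReal 0 1 z *
              ∫ u, gaussianPDFReal (z*s) Va u * tanh u ^ 2 := by
          intro z
          rw [← integral_const_mul]
          congr 1
          funext u
          rw [Real.norm_eq_abs, abs_of_nonneg]
          exact mul_nonneg (gaussianPDFReal_nonneg _ _ _)
            (mul_nonneg (gaussianPDFReal_nonneg _ _ _) (sq_nonneg _))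
        refine (integrable_gaussianPDFReal 0 1).mono'
          (hFmeas.norm.integral_prod_right') (ae_of_all _ fun z => ?_)
        simp only [Function.uncurry_apply_pair]
        rw [heq z, Real.norm_eq_abs, abs_of_nonneg
          (mul_nonneg (gaussianPDFReal_nonneg _ _ _) (hnn z))]
        exact mul_le_of_le_one_right (gaussianPDFReal_nonneg _ _ _) (hle1 z)
    rw [integral_integral_swap hswapInt]
    have hpull : ∀ u : ℝ, (∫ z, gaussianPDFReal 0 1 z *
        (gaussianPDFReal (z*s) Va u * tanh u ^ 2))
        = (∫ z, gaussianPDFReal 0 1 z * gaussianPDFReal (z*s) Va u) * tanh u ^ 2 := by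
      intro u
      rw [← integral_mul_const]
      congr 1
      funext z
      ring
    simp only [hpull]
    simp_rw [conv_pdf s hVa]
    have hWeq : s^2 + (Va:ℝ) = μr*q + μr^2*x^2*a := by
      rw [Real.sq_sqrt (le_of_lt (mul_pos hμ hq)), hVac, htdef]
      ring
    have hWpos : (0:ℝ) < s^2 + (Va:ℝ) := by
      rw [hWeq]
      nlinarith [mul_pos hμ hq, mul_nonneg (mul_nonneg (sq_nonneg μr) (sq_nonneg x)) ha.le]
    have hWnn : ((s^2 + (Va:ℝ)).toNNReal) ≠ 0 := by
      simp only [ne_eq, Real.toNNReal_eq_zero, not_le]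
      exact hWpos
    rw [← integral_gaussianReal_eq 0 _ hWnn, integral_tanh_g hWpos.le, hWeq]


lemma exists_fix {μr : ℝ} (hμ : 0 < μr) {c : ℝ} (hc : 0 ≤ c)
    {q₀ : ℝ} (h0 : 0 < q₀) (h1 : q₀ ≤ 1) (hle : q₀ ≤ gInt (μr*q₀ + c)) :
    ∃ q ∈ Set.Ioc (0:ℝ) 1, q = gInt (μr*q + c) := by
  have hcont : Continuous fun q : ℝ => gInt (μr*q + c) - q :=
    (gInt_continuous.comp (by continuity)).sub continuous_id
  have hf1 : gInt (μr*1 + c) - 1 ≤ 0 := by linarith [gInt_lt_one (μr*1+c)]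
  have hf0 : (0:ℝ) ≤ gInt (μr*q₀ + c) - q₀ := by linarith
  obtain ⟨q, hqmem, hfq⟩ := intermediate_value_Icc' h1 hcont.continuousOn ⟨hf1, hf0⟩
  exact ⟨q, ⟨lt_of_lt_of_le h0 hqmem.1, hqmem.2⟩, (sub_eq_zero.mp hfq).symm⟩

lemma start_pos {μr c : ℝ} (hμ : 0 < μr) (hc : 0 < c) :
    ∃ q₀ : ℝ, 0 < q₀ ∧ q₀ ≤ 1 ∧ q₀ ≤ gInt (μr*q₀ + c) := by
  have h0 : 0 < gInt c := by
    have := gInt_lt_gInt (le_refl 0) hc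
    rwa [gInt_zero] at this
  refine ⟨gInt c / 2, half_pos h0, by linarith [gInt_lt_one c], ?_⟩
  have : gInt c < gInt (μr * (gInt c/2) + c) := by
    apply gInt_lt_gInt hc.le
    nlinarith
  linarith

lemma start_zero {μr : ℝ} (hμ1 : 1 < μr) :
    ∃ q₀ : ℝ, 0 < q₀ ∧ q₀ ≤ 1 ∧ q₀ ≤ gInt (μr*q₀ + 0) := by
  have hμ : 0 < μr := by linarith
  have hA : 0 < (μr-1)/(2*μr^2) := div_pos (by linarith) (by positivity)
  set q₀ : ℝ := min ((μr-1)/(2*μr^2)) 1 / 2 with hdef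
  have h0 : 0 < q₀ := half_pos (lt_min hA one_pos)
  have h1 : q₀ ≤ 1 := by
    have := min_le_right ((μr-1)/(2*μr^2)) 1
    rw [hdef]
    linarith
  have hlt : q₀ < (μr-1)/(2*μr^2) := by
    have := min_le_left ((μr-1)/(2*μr^2)) 1
    rw [hdef]
    linarith
  have hmul : q₀ * (2*μr^2) < μr - 1 := (lt_div_iff₀ (by positivity)).mp hlt
  refine ⟨q₀, h0, h1, ?_⟩
  have hlb := gInt_lb (V := μr*q₀ + 0) (by nlinarith)
  nlinarith

lemma uniq_fix {μr c : ℝ} (hμ : 0 < μr) (hc : 0 ≤ c) {q₁ q₂ : ℝ}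
    (m₁ : q₁ ∈ Set.Ioc (0:ℝ) 1) (e₁ : q₁ = gInt (μr*q₁+c))
    (m₂ : q₂ ∈ Set.Ioc (0:ℝ) 1) (e₂ : q₂ = gInt (μr*q₂+c)) : q₁ = q₂ := by
  rcases lt_trichotomy q₁ q₂ with h | h | h
  · exfalso
    have hLG := gInt_LG hμ hc m₁.1 h
    rw [← e₁, ← e₂] at hLG
    nlinarith
  · exact h
  · exfalso
    have hLG := gInt_LG hμ hc m₂.1 h
    rw [← e₁, ← e₂] at hLG
    nlinarith

lemma mono_fix {μr c₁ c₂ : ℝ} (hμ : 0 < μr) (hc₁ : 0 ≤ c₁) (hc : c₁ < c₂)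
    {q₁ q₂ : ℝ} (m₁ : q₁ ∈ Set.Ioc (0:ℝ) 1) (m₂ : q₂ ∈ Set.Ioc (0:ℝ) 1)
    (e₁ : q₁ = gInt (μr*q₁+c₁)) (e₂ : q₂ = gInt (μr*q₂+c₂)) : q₁ < q₂ := by
  by_contra hle
  push_neg at hle
  have hstar : gInt (μr*q₂+c₁) < q₂ := by
    calc gInt (μr*q₂+c₁) < gInt (μr*q₂+c₂) :=
          gInt_lt_gInt (by nlinarith [m₂.1]) (by linarith)
    _ = q₂ := e₂.symm
  rcases eq_or_lt_of_le hle with heq | hlt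
  · rw [← heq] at e₁
    rw [← e₁] at hstar
    exact absurd hstar (lt_irrefl _)
  · have h := gInt_LG hμ hc₁ m₂.1 hlt
    rw [← e₁] at h
    have hq₁ : 0 < q₁ := m₁.1
    have h' : q₁*q₂ < q₁ * gInt (μr*q₂+c₁) := by linear_combination h
    have := lt_of_mul_lt_mul_left h' hq₁.le
    linarith

end RSaux

noncomputable section

/-- The right-hand side of the replica-symmetric consistency equation:
`𝔼 tanh²(z √(μ q) + μ ξ x)` with `z ∼ N(0,1)`, `ξ ∼ N(0,a)` independent. -/
def rsRHS (μ a x q : ℝ) : ℝ :=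
  ∫ p : ℝ × ℝ, Real.tanh (p.1 * Real.sqrt (μ * q) + μ * p.2 * x) ^ 2
    ∂((gaussianReal 0 1).prod (gaussianReal 0 a.toNNReal))

lemma rsRHS_gInt (μ a : ℝ) (hμ : 0 < μ) (ha : 0 < a) {x q : ℝ} (hq : 0 < q) :
    rsRHS μ a x q = RSaux.gInt (μ*q + μ^2*x^2*a) := by
  unfold rsRHS
  exact RSaux.rsRHS_eq hμ ha hq

/-- Existence, uniqueness (Latala–Guerra) and strict monotonicity in `x ≥ 0`
of the solution `q = q(x,μ,a) ∈ (0,1]` of the consistency equation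
`q = 𝔼 tanh²(z√(μq) + μξx)`. -/
theorem consistency_equation_unique_solution
    (μ a : ℝ) (hμ : 0 < μ) (ha : 0 < a) :
    (∀ x : ℝ, (x ≠ 0 ∨ 1 < μ) →
      ∃! q : ℝ, q ∈ Set.Ioc (0 : ℝ) 1 ∧ q = rsRHS μ a x q) ∧
    (∀ x₁ x₂ q₁ q₂ : ℝ, 0 ≤ x₁ → x₁ < x₂ →
      q₁ ∈ Set.Ioc (0 : ℝ) 1 → q₁ = rsRHS μ a x₁ q₁ →
      q₂ ∈ Set.Ioc (0 : ℝ) 1 → q₂ = rsRHS μ a x₂ q₂ →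
      q₁ < q₂) := by
  constructor
  · intro x hx
    have hc0 : (0:ℝ) ≤ μ^2*x^2*a := by positivity
    have hstart : ∃ q₀ : ℝ, 0 < q₀ ∧ q₀ ≤ 1 ∧ q₀ ≤ RSaux.gInt (μ*q₀ + μ^2*x^2*a) := by
      rcases eq_or_ne x 0 with rfl | hxne
      · have hμ1 : 1 < μ := hx.resolve_left (by simp)
        obtain ⟨q₀, h0, h1, hle⟩ := RSaux.start_zero hμ1
        exact ⟨q₀, h0, h1, by
          rw [show μ*q₀ + μ^2*0^2*a = μ*q₀ + 0 by ring]
          exact hle⟩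
      · obtain ⟨q₀, h0, h1, hle⟩ := RSaux.start_pos (c := μ^2*x^2*a) hμ (by positivity)
        exact ⟨q₀, h0, h1, hle⟩
    obtain ⟨q₀, h0, h1, hle⟩ := hstart
    obtain ⟨q, hqmem, hqeq⟩ := RSaux.exists_fix hμ hc0 h0 h1 hle
    refine ⟨q, ⟨hqmem, ?_⟩, ?_⟩
    · rw [rsRHS_gInt μ a hμ ha hqmem.1]
      exact hqeq
    · rintro y ⟨hymem, hyeq⟩
      refine RSaux.uniq_fix hμ hc0 hymem ?_ hqmem hqeq
      rw [← rsRHS_gInt μ a hμ ha hymem.1]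
      exact hyeq
  · intro x₁ x₂ q₁ q₂ hx1 h12 m₁ e₁ m₂ e₂
    have hcc : μ^2*x₁^2*a < μ^2*x₂^2*a := by
      have hx2 : x₁^2 < x₂^2 := by nlinarith
      exact mul_lt_mul_of_pos_right
        (mul_lt_mul_of_pos_left hx2 (by positivity : (0:ℝ) < μ^2)) ha
    refine RSaux.mono_fix hμ (by positivity) hcc m₁ m₂ ?_ ?_
    · rw [← rsRHS_gInt μ a hμ ha m₁.1]
      exact e₁
    · rw [← rsRHS_gInt μ a hμ ha m₂.1]
      exact e₂

end
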